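/- Let τ > 0, μ ∈ ℝ, i ∈ {1,2}, let v(s) = (2/√τ)·( (−2μ/√τ)·(1 − cos(√τ·s)) + (−1)^i·sin(√τ·s) ), and s_i its first positive zero. Define on (0, s_i) the function β(s) = (2·v(s)·v''(s) + 4·v(s)² − v'(s)²)/(4·v(s)² + v'(s)²). Then β(s) → −1 as s → 0⁺ and as s → s_i⁻. -/

import Mathlib

open Real

theorem stmt_19 (τ μ : ℝ) (hτ : 0 < τ) (i : ℕ) (hi : i = 1 ∨ i = 2) (v : ℝ → ℝ)
    (hv : ∀ s : ℝ, v s = (2 / Real.sqrt τ) *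
      ((-2 * μ / Real.sqrt τ) * (1 - Real.cos (Real.sqrt τ * s))
        + (-1 : ℝ) ^ i * Real.sin (Real.sqrt τ * s)))
    (si : ℝ) (hsi : si ∈ Set.Ioo 0 (2 * π / Real.sqrt τ)) (hz : v si = 0)
    (hfirst : ∀ s ∈ Set.Ioo 0 si, v s ≠ 0)
    (β : ℝ → ℝ)
    (hβ : ∀ s : ℝ, β s =
      (2 * v s * deriv (deriv v) s + 4 * v s ^ 2 - (deriv v s) ^ 2)
        / (4 * v s ^ 2 + (deriv v s) ^ 2)) :
    Filter.Tendsto β (nhdsWithin 0 (Set.Ioi 0)) (nhds (-1)) ∧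
    Filter.Tendsto β (nhdsWithin si (Set.Iio si)) (nhds (-1)) := by
  have hk : (0:ℝ) < Real.sqrt τ := Real.sqrt_pos.mpr hτ
  set k : ℝ := Real.sqrt τ with hkdef
  set c : ℝ := 2 / k with hcdef
  set a : ℝ := -2 * μ / k with hadef
  set e : ℝ := (-1 : ℝ) ^ i with hedef
  have he2 : e ^ 2 = 1 := by rcases hi with h | h <;> simp [hedef, h]
  have hcne : c ≠ 0 := by positivity
  have hkne : k ≠ 0 := ne_of_gt hk
  clear_value k c a e
  have hvf : v = fun s => c * (a * (1 - Real.cos (k * s)) + e * Real.sin (k * s)) :=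
    funext hv
  -- first derivative
  have hlin : ∀ s : ℝ, HasDerivAt (fun s : ℝ => k * s) k s := by
    intro s
    simpa using (hasDerivAt_id s).const_mul k
  have hd1 : ∀ s : ℝ, HasDerivAt v
      (c * (a * (k * Real.sin (k * s)) + e * (k * Real.cos (k * s)))) s := by
    intro s
    rw [hvf]
    have hcos : HasDerivAt (fun s : ℝ => Real.cos (k * s)) (-Real.sin (k * s) * k) s :=
      (Real.hasDerivAt_cos (k * s)).comp s (hlin s)
    have hsin : HasDerivAt (fun s : ℝ => Real.sin (k * s)) (Real.cos (k * s) * k) s :=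
      (Real.hasDerivAt_sin (k * s)).comp s (hlin s)
    have := (((hcos.const_sub 1).const_mul a).add (hsin.const_mul e)).const_mul c
    exact this.congr_deriv (by ring)
  have hderiv1 : deriv v = fun s =>
      c * (a * (k * Real.sin (k * s)) + e * (k * Real.cos (k * s))) :=
    funext fun s => (hd1 s).deriv
  -- second derivative
  have hd2 : ∀ s : ℝ, HasDerivAt (deriv v)
      (c * (a * (k * (k * Real.cos (k * s))) - e * (k * (k * Real.sin (k * s))))) s := by
    intro s
    rw [hderiv1]
    have hcos : HasDerivAt (fun s : ℝ => Real.cos (k * s)) (-Real.sin (k * s) * k) s :=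
      (Real.hasDerivAt_cos (k * s)).comp s (hlin s)
    have hsin : HasDerivAt (fun s : ℝ => Real.sin (k * s)) (Real.cos (k * s) * k) s :=
      (Real.hasDerivAt_sin (k * s)).comp s (hlin s)
    have := (((hsin.const_mul k).const_mul a).add
      ((hcos.const_mul k).const_mul e)).const_mul c
    exact this.congr_deriv (by ring)
  have hderiv2 : deriv (deriv v) = fun s =>
      c * (a * (k * (k * Real.cos (k * s))) - e * (k * (k * Real.sin (k * s)))) :=
    funext fun s => (hd2 s).deriv
  -- continuity of the pieces
  have hcv : Continuous v := by rw [hvf]; fun_prop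
  have hcv1 : Continuous (deriv v) := by rw [hderiv1]; fun_prop
  have hcv2 : Continuous (deriv (deriv v)) := by rw [hderiv2]; fun_prop
  have hβf : β = fun s =>
      (2 * v s * deriv (deriv v) s + 4 * v s ^ 2 - (deriv v s) ^ 2)
        / (4 * v s ^ 2 + (deriv v s) ^ 2) := funext hβ
  -- key lemma
  have key : ∀ p : ℝ, v p = 0 → deriv v p ≠ 0 →
      Filter.Tendsto β (nhds p) (nhds (-1)) := by
    intro p hp hdp
    have hden : (4 * v p ^ 2 + (deriv v p) ^ 2) ≠ 0 := by positivity
    have hcont : ContinuousAt β p := by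
      rw [hβf]
      exact ContinuousAt.div (by fun_prop) (by fun_prop) hden
    have hval : β p = -1 := by
      rw [hβ, hp]
      field_simp
      ring
    have := hcont.tendsto
    rwa [hval] at this
  constructor
  · -- at 0
    have hv0 : v 0 = 0 := by simp [hv]
    have hd0 : deriv v 0 ≠ 0 := by
      have h0 : deriv v 0 = c * k * e := by
        rw [hderiv1]
        simp only [mul_zero, Real.sin_zero, Real.cos_zero, mul_one, zero_add]
        ring
      rw [h0]
      have hene : e ≠ 0 := by
        intro h
        rw [h] at he2; norm_num at he2
      exact mul_ne_zero (mul_ne_zero hcne hkne) hene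
    exact (key 0 hv0 hd0).mono_left nhdsWithin_le_nhds
  · -- at si
    have hdsi : deriv v si ≠ 0 := by
      rw [hderiv1]
      intro h
      set S := Real.sin (k * si) with hS
      set C := Real.cos (k * si) with hC
      have hP : S ^ 2 + C ^ 2 = 1 := Real.sin_sq_add_cos_sq (k * si)
      have hE1 : a * (1 - C) + e * S = 0 := by
        have := hz
        rw [hv si] at this
        have h2 : c * (a * (1 - C) + e * S) = 0 := this
        exact (mul_eq_zero.mp h2).resolve_left hcne
      have hE2 : a * S + e * C = 0 := by
        have h2 : c * (k * (a * S + e * C)) = 0 := by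
          rw [← h]; ring
        have h3 := (mul_eq_zero.mp h2).resolve_left hcne
        exact (mul_eq_zero.mp h3).resolve_left hkne
      have hC1 : C = 1 := by
        linear_combination (-(e * S)) * hE1 + (e * (1 - C)) * hE2 + e ^ 2 * hP + (1 - C) * he2
      -- contradiction: k * si ∈ (0, 2π)
      obtain ⟨hs0, hs2⟩ := hsi
      have hw0 : 0 < k * si := by positivity
      have hw2 : k * si < 2 * π := by
        have h2 := (lt_div_iff₀ hk).mp hs2
        have h3 : k * si = si * k := mul_comm k si
        linarith
      have : k * si = 0 :=
        (Real.cos_eq_one_iff_of_lt_of_lt (by linarith) hw2).mp hC1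
      linarith
    exact (key si hz hdsi).mono_left nhdsWithin_le_nhds
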